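/- Let u be a 2×2 complex matrix with det u = 1. Then for every n ≥ 1, p₁(u) · p_n(u) = p_{n−1}(u) + p_{n+1}(u), where p_n(u) is the trace of the endomorphism induced by u on the space of homogeneous polynomials of degree n in two variables (the character of the n-th symmetric power representation Sym^n(ℂ²)); moreover p₁(u) = trace(u). This is the Clebsch–Gordan relation π₁ ⊗ π_n ≅ π_{n−1} ⊕ π_{n+1} at the level of characters. -/

import Mathlib

open MvPolynomial

/-- The algebra endomorphism of `ℂ[x₁,x₂]` induced by a `2 × 2` matrix `u`,
sending the variable `X i` to `∑ j, u j i • X j`. -/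
noncomputable def matrixSubst (u : Matrix (Fin 2) (Fin 2) ℂ) :
    MvPolynomial (Fin 2) ℂ →ₐ[ℂ] MvPolynomial (Fin 2) ℂ :=
  aeval fun i => ∑ j, u j i • X j

/-- `matrixSubst u` preserves the homogeneous component of degree `n`. -/
theorem matrixSubst_mem (u : Matrix (Fin 2) (Fin 2) ℂ) (n : ℕ) :
    ∀ x ∈ homogeneousSubmodule (Fin 2) ℂ n,
      matrixSubst u x ∈ homogeneousSubmodule (Fin 2) ℂ n := by
  intro x hx
  rw [← support_sum_monomial_coeff x, map_sum]
  apply Submodule.sum_mem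
  intro d hd
  have hdeg : d.degree = n := by
    rw [Finsupp.degree_eq_weight_one]
    exact hx (mem_support_iff.mp hd)
  rw [mem_homogeneousSubmodule, matrixSubst, aeval_monomial, algebraMap_eq]
  apply MvPolynomial.IsHomogeneous.C_mul
  rw [Finsupp.prod]
  have : n = ∑ i ∈ d.support, d i := by
    rw [← hdeg]; rfl
  rw [this]
  apply MvPolynomial.IsHomogeneous.prod
  intro i _
  have hL : ((∑ j, u j i • X j : MvPolynomial (Fin 2) ℂ)).IsHomogeneous 1 := by
    apply MvPolynomial.IsHomogeneous.sum
    intro j _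
    rw [smul_eq_C_mul]
    exact isHomogeneous_C_mul_X _ _
  simpa using hL.pow (d i)

/-- `p n u` : the trace of the endomorphism induced by `u` on the space of homogeneous
polynomials of degree `n` in two variables (the character of `Symⁿ(ℂ²)`). -/
noncomputable def symCharacter (n : ℕ) (u : Matrix (Fin 2) (Fin 2) ℂ) : ℂ :=
  LinearMap.trace ℂ (homogeneousSubmodule (Fin 2) ℂ n)
    ((matrixSubst u).toLinearMap.restrict (matrixSubst_mem u n))

/-! ### Auxiliary infrastructure -/

theorem matrixSubst_X (u : Matrix (Fin 2) (Fin 2) ℂ) (i : Fin 2) :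
    matrixSubst u (X i) = ∑ j, u j i • X j := by
  simp [matrixSubst]

theorem matrixSubst_mul (u v : Matrix (Fin 2) (Fin 2) ℂ) (p : MvPolynomial (Fin 2) ℂ) :
    matrixSubst u (matrixSubst v p) = matrixSubst (u * v) p := by
  have : (matrixSubst u).comp (matrixSubst v) = matrixSubst (u * v) := by
    apply MvPolynomial.algHom_ext
    intro i
    simp only [AlgHom.comp_apply, matrixSubst_X, map_sum, map_smul, Matrix.mul_apply,
      Finset.sum_smul, smul_smul, Finset.smul_sum]
    rw [Finset.sum_comm]
    exact Finset.sum_congr rfl fun k _ => Finset.sum_congr rfl fun j _ => by rw [mul_comm]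
  exact DFunLike.congr_fun this p

theorem restrict_mul (u v : Matrix (Fin 2) (Fin 2) ℂ) (n : ℕ) :
    ((matrixSubst (u * v)).toLinearMap.restrict (matrixSubst_mem (u * v) n)) =
      ((matrixSubst u).toLinearMap.restrict (matrixSubst_mem u n)) *
      ((matrixSubst v).toLinearMap.restrict (matrixSubst_mem v n)) := by
  refine LinearMap.ext fun x => Subtype.ext ?_
  simp only [Module.End.mul_apply, LinearMap.restrict_coe_apply, AlgHom.toLinearMap_apply]
  exact (matrixSubst_mul u v x.1).symm

theorem symCharacter_mul_comm (n : ℕ) (u v : Matrix (Fin 2) (Fin 2) ℂ) :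
    symCharacter n (u * v) = symCharacter n (v * u) := by
  unfold symCharacter
  rw [restrict_mul, restrict_mul, LinearMap.trace_mul_comm]

/-! ### A basis of monomials for the homogeneous component of degree `n` -/

/-- Exponent of the `k`-th basis monomial of degree `n` in two variables. -/
noncomputable def expo (n k : ℕ) : Fin 2 →₀ ℕ := Finsupp.single 0 k + Finsupp.single 1 (n - k)

theorem expo_apply_zero (n k : ℕ) : expo n k 0 = k := by
  simp [expo]

theorem degree_fin_two (d : Fin 2 →₀ ℕ) : d.degree = d 0 + d 1 := by
  show ∑ i ∈ d.support, d i = _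
  rw [Finset.sum_subset (Finset.subset_univ d.support) (by
    intro x _ hx
    simpa using (Finsupp.notMem_support_iff.mp hx))]
  simp [Fin.sum_univ_two]

theorem expo_degree (n k : ℕ) (hk : k ≤ n) : (expo n k).degree = n := by
  rw [degree_fin_two]
  simp [expo, Finsupp.single_apply]
  omega

theorem eq_expo_of_degree (d : Fin 2 →₀ ℕ) (n : ℕ) (hd : d.degree = n) :
    d 0 ≤ n ∧ d = expo n (d 0) := by
  rw [degree_fin_two] at hd
  constructor
  · omega
  · ext i
    fin_cases i <;> simp [expo, Finsupp.single_apply] <;> omega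

theorem monomial_expo_mem (n : ℕ) (k : ℕ) (hk : k ≤ n) :
    (monomial (expo n k) (1 : ℂ)) ∈ homogeneousSubmodule (Fin 2) ℂ n := by
  rw [mem_homogeneousSubmodule]
  exact isHomogeneous_monomial _ (expo_degree n k hk)

noncomputable def bvec (n : ℕ) (k : Fin (n + 1)) : homogeneousSubmodule (Fin 2) ℂ n :=
  ⟨monomial (expo n k) 1, monomial_expo_mem n k (Nat.lt_succ_iff.mp k.2)⟩

theorem expo_inj (n : ℕ) {k l : Fin (n + 1)} (h : expo n k = expo n l) : k = l := by
  have := congrFun (congrArg DFunLike.coe h) 0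
  simp only [expo_apply_zero] at this
  exact Fin.ext this

noncomputable def coeffEquiv (n : ℕ) :
    homogeneousSubmodule (Fin 2) ℂ n ≃ₗ[ℂ] (Fin (n + 1) → ℂ) where
  toFun x k := coeff (expo n k) x.1
  map_add' x y := by funext k; simp
  map_smul' c x := by funext k; simp
  invFun c := ∑ k, c k • bvec n k
  right_inv c := by
    funext k
    have hcoe : ((∑ j, c j • bvec n j : homogeneousSubmodule (Fin 2) ℂ n) :
        MvPolynomial (Fin 2) ℂ) = ∑ j : Fin (n + 1), c j • monomial (expo n ↑j) 1 := by
      push_cast [bvec]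
      rfl
    show coeff (expo n ↑k) ((∑ j, c j • bvec n j : homogeneousSubmodule (Fin 2) ℂ n) :
        MvPolynomial (Fin 2) ℂ) = c k
    simp only [hcoe, coeff_sum, coeff_smul, coeff_monomial, smul_eq_mul, mul_ite, mul_one,
      mul_zero]
    rw [Finset.sum_congr rfl (g := fun j => if j = k then c j else 0) fun j _ => by
      rcases eq_or_ne j k with h | h
      · simp [h]
      · rw [if_neg fun he => h (expo_inj n he)]; simp [h]]
    simp
  left_inv x := by
    apply Subtype.ext
    have hx : MvPolynomial.IsHomogeneous x.1 n := x.2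
    have hcoe : ((∑ k : Fin (n + 1), (coeff (expo n ↑k) x.1) • bvec n k :
        homogeneousSubmodule (Fin 2) ℂ n) : MvPolynomial (Fin 2) ℂ)
        = ∑ k : Fin (n + 1), monomial (expo n ↑k) (coeff (expo n ↑k) x.1) := by
      push_cast [bvec]
      exact Finset.sum_congr rfl fun k _ => by rw [smul_monomial, smul_eq_mul, mul_one]
    show ((∑ k : Fin (n + 1), (coeff (expo n ↑k) x.1) • bvec n k :
        homogeneousSubmodule (Fin 2) ℂ n) : MvPolynomial (Fin 2) ℂ) = x.1
    rw [hcoe]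
    rw [show (∑ k : Fin (n + 1), monomial (expo n ↑k) (coeff (expo n ↑k) x.1))
        = ∑ m ∈ Finset.univ.image (fun k : Fin (n + 1) => expo n ↑k),
            monomial m (coeff m x.1) from
      (Finset.sum_image (f := fun m => monomial m (coeff m x.1))
        fun a _ b _ h => expo_inj n h).symm]
    refine Eq.trans (Finset.sum_subset ?_ ?_).symm (support_sum_monomial_coeff x.1)
    · intro m hm
      have hd : m.degree = n := by
        rw [Finsupp.degree_eq_weight_one]
        exact hx (mem_support_iff.mp hm)
      obtain ⟨h1, h2⟩ := eq_expo_of_degree m n hd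
      exact Finset.mem_image.mpr ⟨⟨m 0, Nat.lt_succ_of_le h1⟩, Finset.mem_univ _, h2.symm⟩
    · intro m _ hm
      rw [notMem_support_iff.mp hm, monomial_zero]

noncomputable def mvBasis (n : ℕ) : Module.Basis (Fin (n + 1)) ℂ (homogeneousSubmodule (Fin 2) ℂ n) :=
  Module.Basis.ofEquivFun (coeffEquiv n)

theorem mvBasis_apply (n : ℕ) (k : Fin (n + 1)) : mvBasis n k = bvec n k := by
  apply (coeffEquiv n).injective
  funext i
  have h1 : coeffEquiv n (mvBasis n k) i = (mvBasis n).repr (mvBasis n k) i :=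
    (Module.Basis.ofEquivFun_repr_apply _ _ _).symm
  rw [h1, Module.Basis.repr_self]
  show _ = coeff (expo n ↑i) (monomial (expo n ↑k) 1)
  rw [coeff_monomial]
  rcases eq_or_ne k i with h | h
  · simp [h]
  · rw [if_neg fun he => h (expo_inj n he), Finsupp.single_apply_eq_zero.mpr
      fun hh => absurd hh.symm h]

/-- The trace formula: `symCharacter n u` is the sum of the diagonal coefficients in the
monomial basis. -/
theorem symCharacter_eq (n : ℕ) (u : Matrix (Fin 2) (Fin 2) ℂ) :
    symCharacter n u = ∑ k : Fin (n + 1),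
      coeff (expo n ↑k) (matrixSubst u (monomial (expo n ↑k) 1)) := by
  rw [symCharacter, LinearMap.trace_eq_matrix_trace ℂ (mvBasis n), Matrix.trace]
  refine Finset.sum_congr rfl fun k _ => ?_
  show (LinearMap.toMatrix (mvBasis n) (mvBasis n) _) k k = _
  rw [LinearMap.toMatrix_apply, mvBasis_apply]
  rw [show ((mvBasis n).repr _) k = coeffEquiv n _ k from Module.Basis.ofEquivFun_repr_apply _ _ _]
  show coeff (expo n ↑k) (((matrixSubst u).toLinearMap.restrict (matrixSubst_mem u n)
    (bvec n k)) : MvPolynomial (Fin 2) ℂ) = _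
  rfl

/-! ### Diagonal coefficients for triangular matrices -/

theorem coeff_key (k m : ℕ) (b d : ℂ) :
    coeff (Finsupp.single 0 k + Finsupp.single 1 m)
      ((X 0 : MvPolynomial (Fin 2) ℂ) ^ k * (b • X 0 + d • X 1) ^ m) = d ^ m := by
  rw [add_pow, Finset.mul_sum, coeff_sum]
  rw [Finset.sum_eq_single 0]
  · simp [smul_pow, mul_smul_comm, smul_mul_assoc, X_pow_eq_monomial, monomial_mul,
      coeff_smul, coeff_monomial]
  · intro i hi hne
    simp only [smul_pow, X_pow_eq_monomial, smul_monomial, ← C_eq_coe_nat, C_apply,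
      monomial_mul, coeff_monomial, smul_eq_mul, mul_one]
    rw [if_neg]
    intro h
    have := congrFun (congrArg DFunLike.coe h) 0
    simp [Finsupp.single_apply] at this
    omega
  · simp

theorem coeff_triangular (v : Matrix (Fin 2) (Fin 2) ℂ) (hv : v 1 0 = 0) (m k : ℕ) :
    coeff (expo m k) (matrixSubst v (monomial (expo m k) 1)) = v 0 0 ^ k * v 1 1 ^ (m - k) := by
  rw [show monomial (expo m k) (1 : ℂ) = X 0 ^ k * X 1 ^ (m - k) from by
    rw [X_pow_eq_monomial, X_pow_eq_monomial, monomial_mul, one_mul]; rfl]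
  rw [map_mul, map_pow, map_pow, matrixSubst_X, matrixSubst_X]
  rw [show (∑ j, v j 0 • X j : MvPolynomial (Fin 2) ℂ) = v 0 0 • X 0 by
    rw [Fin.sum_univ_two, hv, zero_smul, add_zero]]
  rw [Fin.sum_univ_two, smul_pow, smul_mul_assoc, coeff_smul]
  rw [show expo m k = Finsupp.single 0 k + Finsupp.single 1 (m - k) from rfl]
  rw [coeff_key]
  rfl

/-! ### The key algebraic identity -/

theorem sum_key (a d : ℂ) (h : a * d = 1) (m : ℕ) :
    (a + d) * (∑ k ∈ Finset.range (m + 2), a ^ k * d ^ (m + 1 - k)) =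
      (∑ k ∈ Finset.range (m + 1), a ^ k * d ^ (m - k)) +
      ∑ k ∈ Finset.range (m + 3), a ^ k * d ^ (m + 2 - k) := by
  have F1 : ∑ k ∈ Finset.range (m + 2), a ^ (k + 1) * d ^ (m + 1 - k)
      = (∑ k ∈ Finset.range (m + 3), a ^ k * d ^ (m + 2 - k)) - d ^ (m + 2) := by
    rw [Finset.sum_range_succ' (fun k => a ^ k * d ^ (m + 2 - k)) (m + 2)]
    simp only [Nat.succ_sub_succ, pow_zero, Nat.sub_zero, one_mul]
    ring
  have F2 : ∑ k ∈ Finset.range (m + 2), a ^ k * d ^ (m + 2 - k)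
      = (∑ k ∈ Finset.range (m + 3), a ^ k * d ^ (m + 2 - k)) - a ^ (m + 2) := by
    rw [Finset.sum_range_succ (fun k => a ^ k * d ^ (m + 2 - k)) (m + 2)]
    simp only [Nat.sub_self, pow_zero, mul_one]
    ring
  have F3 : (∑ k ∈ Finset.range (m + 3), a ^ k * d ^ (m + 2 - k))
      = a ^ (m + 2) + d ^ (m + 2) + ∑ k ∈ Finset.range (m + 1), a ^ k * d ^ (m - k) := by
    rw [Finset.sum_range_succ (fun k => a ^ k * d ^ (m + 2 - k)) (m + 2),
      Finset.sum_range_succ' (fun k => a ^ k * d ^ (m + 2 - k)) (m + 1)]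
    rw [Finset.sum_congr rfl (g := fun k => a ^ k * d ^ (m - k)) fun k hk => by
      have hk' : k ≤ m := Nat.lt_succ_iff.mp (Finset.mem_range.mp hk)
      rw [Nat.succ_sub_succ, show m + 1 - k = (m - k) + 1 by omega]
      calc a ^ (k + 1) * d ^ ((m - k) + 1) = (a * d) * (a ^ k * d ^ (m - k)) := by ring
        _ = a ^ k * d ^ (m - k) := by rw [h, one_mul]]
    simp only [Nat.sub_self, pow_zero, mul_one, Nat.sub_zero, one_mul]
    ring
  have E1 : a * (∑ k ∈ Finset.range (m + 2), a ^ k * d ^ (m + 1 - k))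
      = ∑ k ∈ Finset.range (m + 2), a ^ (k + 1) * d ^ (m + 1 - k) := by
    rw [Finset.mul_sum]
    exact Finset.sum_congr rfl fun k _ => by ring
  have E2 : d * (∑ k ∈ Finset.range (m + 2), a ^ k * d ^ (m + 1 - k))
      = ∑ k ∈ Finset.range (m + 2), a ^ k * d ^ (m + 2 - k) := by
    rw [Finset.mul_sum]
    refine Finset.sum_congr rfl fun k hk => ?_
    have hk' : k ≤ m + 1 := Nat.lt_succ_iff.mp (Finset.mem_range.mp hk)
    rw [show m + 2 - k = (m + 1 - k) + 1 by omega, pow_succ]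
    ring
  rw [add_mul, E1, E2, F1, F2, F3]
  ring

/-! ### Triangularization -/

open Polynomial in
theorem exists_conj_triangular (u : Matrix (Fin 2) (Fin 2) ℂ) :
    ∃ g h : Matrix (Fin 2) (Fin 2) ℂ, g * h = 1 ∧ (h * u * g) 1 0 = 0 := by
  by_cases hc : u 1 0 = 0
  · exact ⟨1, 1, by simp, by simpa using hc⟩
  · obtain ⟨x, hx⟩ := IsAlgClosed.exists_root
      (Polynomial.C (u 1 0) * Polynomial.X ^ 2 +
        Polynomial.C (u 1 1 - u 0 0) * Polynomial.X + Polynomial.C (-(u 0 1)))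
      (by rw [Polynomial.degree_quadratic hc]; norm_num)
    have hroot : u 1 0 * x ^ 2 + (u 1 1 - u 0 0) * x - u 0 1 = 0 := by
      have := hx
      simp only [IsRoot, Polynomial.eval_add, Polynomial.eval_mul, Polynomial.eval_pow,
        Polynomial.eval_C, Polynomial.eval_X] at this
      linear_combination this
    refine ⟨!![x, 1; 1, 0], !![0, 1; 1, -x], ?_, ?_⟩
    · ext i j
      fin_cases i <;> fin_cases j <;>
        simp [Matrix.mul_apply, Fin.sum_univ_two, Matrix.one_apply]
    · simp only [Matrix.mul_apply, Fin.sum_univ_two]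
      simp
      linear_combination -hroot

/-- The Clebsch–Gordan relation `π₁ ⊗ πₙ ≅ π_{n-1} ⊕ π_{n+1}` at the level of characters:
for `u ∈ SL(2,ℂ)`, `p₁(u) ⬝ pₙ(u) = p_{n-1}(u) + p_{n+1}(u)`, where moreover
`p₁(u) = trace u`. -/
theorem clebsch_gordan_characters (u : Matrix (Fin 2) (Fin 2) ℂ) (hu : u.det = 1)
    (n : ℕ) (hn : 1 ≤ n) :
    symCharacter 1 u * symCharacter n u = symCharacter (n - 1) u + symCharacter (n + 1) u ∧
    symCharacter 1 u = u.trace := by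
  obtain ⟨g, h, hgh, htri⟩ := exists_conj_triangular u
  set v := h * u * g with hv
  have hsym : ∀ m, symCharacter m v = symCharacter m u := by
    intro m
    rw [hv, symCharacter_mul_comm m (h * u) g, ← mul_assoc, hgh, one_mul]
  have htr : v.trace = u.trace := by
    rw [hv, Matrix.trace_mul_comm (h * u) g, ← mul_assoc, hgh, one_mul]
  have hdet : v.det = 1 := by
    have hgh' : g.det * h.det = 1 := by rw [← Matrix.det_mul, hgh, Matrix.det_one]
    rw [hv, Matrix.det_mul, Matrix.det_mul]
    calc h.det * u.det * g.det = (g.det * h.det) * u.det := by ring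
      _ = 1 := by rw [hgh', hu, mul_one]
  have had : v 0 0 * v 1 1 = 1 := by
    have := hdet
    rw [Matrix.det_fin_two, htri, mul_zero, sub_zero] at this
    exact this
  have hformula : ∀ m, symCharacter m v
      = ∑ k ∈ Finset.range (m + 1), v 0 0 ^ k * v 1 1 ^ (m - k) := by
    intro m
    rw [symCharacter_eq,
      Fin.sum_univ_eq_sum_range (fun k => coeff (expo m k) (matrixSubst v (monomial (expo m k) 1)))]
    exact Finset.sum_congr rfl fun k _ => coeff_triangular v htri m k
  have h1 : symCharacter 1 u = v 0 0 + v 1 1 := by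
    rw [← hsym 1, hformula 1]
    norm_num [Finset.sum_range_succ]
    ring
  obtain ⟨m, rfl⟩ : ∃ m, n = m + 1 := ⟨n - 1, (Nat.succ_pred_eq_of_pos hn).symm⟩
  constructor
  · rw [h1, ← hsym (m + 1), ← hsym ((m + 1) - 1), ← hsym ((m + 1) + 1), hformula, hformula,
      hformula]
    have hred : (m + 1) - 1 = m := rfl
    rw [hred]
    exact sum_key (v 0 0) (v 1 1) had m
  · rw [h1, ← htr, Matrix.trace_fin_two]
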